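/- Let λ ∈ [0,1), let W be a propagation matrix, and let Ψ be a state whose associated lower bound function is valid, i.e., ∑_{j=1}^n Ψ_j(x_j) ≤ E(x) for every configuration x. Then the updated state Ψ' = T_λ(Ψ) again defines a lower bound function: ∑_{i=1}^n Ψ'_i(x_i) ≤ E(x) for every configuration x. -/

import Mathlib

open Finset Filter Topology

/-- A propagation matrix: nonnegative entries with unit column sums. -/
def IsPropagationMatrix {n : ℕ} (W : Fin n → Fin n → ℝ) : Prop :=
  (∀ i j, 0 ≤ W i j) ∧ ∀ j, ∑ i, W i j = 1

/-- The basic cooperative optimization update `T_λ`: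
`T_λ(Ψ)_i(a) = min_{x : x_i = a} ((1−λ) E_i(x) + λ ∑_j w_{ij} Ψ_j(x_j))`. -/
noncomputable def coopT {n : ℕ} {D : Fin n → Type} [∀ i, Fintype (D i)]
    [∀ i, Nonempty (D i)]
    (E : Fin n → ((i : Fin n) → D i) → ℝ) (W : Fin n → Fin n → ℝ) (lam : ℝ)
    (Ψ : (i : Fin n) → D i → ℝ) : (i : Fin n) → D i → ℝ :=
  fun i a =>
    Finset.univ.inf' Finset.univ_nonempty
      (fun x : (j : Fin n) → D j =>
        (1 - lam) * E i (Function.update x i a) +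
          lam * ∑ j, W i j * Ψ j (Function.update x i a j))

/-- The total objective `E(x) = ∑ i, E_i(x)`. -/
def objective {n : ℕ} {D : Fin n → Type}
    (E : Fin n → ((i : Fin n) → D i) → ℝ) (x : (i : Fin n) → D i) : ℝ :=
  ∑ i, E i x

/-- `x̃` is a consensus solution with respect to the state `Ψ` and cooperation strength
`lam`: for every `i`, `x̃` globally minimizes the modified sub-objective
`x ↦ (1−λ) E_i(x) + λ ∑_j w_{ij} Ψ_j(x_j)`. -/
def IsConsensusState {n : ℕ} {D : Fin n → Type}
    (E : Fin n → ((i : Fin n) → D i) → ℝ) (W : Fin n → Fin n → ℝ) (lam : ℝ)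
    (Ψ : (i : Fin n) → D i → ℝ) (xt : (i : Fin n) → D i) : Prop :=
  ∀ i, ∀ x : (j : Fin n) → D j,
    (1 - lam) * E i xt + lam * ∑ j, W i j * Ψ j (xt j)
      ≤ (1 - lam) * E i x + lam * ∑ j, W i j * Ψ j (x j)

/-- If the state `Ψ` defines a lower bound function on the objective,
then so does the updated state `T_λ(Ψ)`. -/
theorem update_preserves_lower_bound (n : ℕ) (hn : 1 ≤ n) (D : Fin n → Type)
    [∀ i, Fintype (D i)] [∀ i, Nonempty (D i)]
    (E : Fin n → ((i : Fin n) → D i) → ℝ) (W : Fin n → Fin n → ℝ)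
    (hW : IsPropagationMatrix W) (lam : ℝ) (hlam0 : 0 ≤ lam) (hlam1 : lam < 1)
    (Ψ : (i : Fin n) → D i → ℝ)
    (hΨ : ∀ x : (i : Fin n) → D i, ∑ j, Ψ j (x j) ≤ objective E x) :
    ∀ x : (i : Fin n) → D i, ∑ i, coopT E W lam Ψ i (x i) ≤ objective E x := by
  intro x
  have hbound : ∀ i, coopT E W lam Ψ i (x i)
      ≤ (1 - lam) * E i x + lam * ∑ j, W i j * Ψ j (x j) := by
    intro i
    have h := Finset.inf'_le (b := x)
      (f := fun y : (j : Fin n) → D j =>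
        (1 - lam) * E i (Function.update y i (x i)) +
          lam * ∑ j, W i j * Ψ j (Function.update y i (x i) j))
      (Finset.mem_univ x)
    simpa only [coopT, Function.update_eq_self] using h
  calc ∑ i, coopT E W lam Ψ i (x i)
      ≤ ∑ i, ((1 - lam) * E i x + lam * ∑ j, W i j * Ψ j (x j)) :=
        Finset.sum_le_sum fun i _ => hbound i
    _ = (1 - lam) * objective E x + lam * ∑ j, Ψ j (x j) := by
        rw [Finset.sum_add_distrib, ← Finset.mul_sum, ← Finset.mul_sum, objective]
        congr 1
        rw [Finset.sum_comm]
        congr 1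
        refine Finset.sum_congr rfl fun j _ => ?_
        rw [← Finset.sum_mul, hW.2 j, one_mul]
    _ ≤ (1 - lam) * objective E x + lam * objective E x := by
        gcongr
        exact hΨ x
    _ = objective E x := by ring
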